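/- Let n and s be positive integers with 1 ≤ s < n and gcd(n, s+1) = 1, and let F(X) = X^{2^n − 2^s} on F_{2^n}. If a, b ∈ F_{2^n}^* with a ≠ b satisfy a·b^{2^s} + a^{2^s}·b = 0 (which forces gcd(s,n) > 1), then ∇_F(a,b) = 2^{gcd(s,n)} − 4. -/

import Mathlib

open Finset

lemma two_pow_sub_one_mod (m n : ℕ) (hm : 0 < m) :
    (2 ^ n - 1) % (2 ^ m - 1) = 2 ^ (n % m) - 1 := by
  obtain ⟨c, hc⟩ : (2 ^ m - 1) ∣ (2 ^ (m * (n / m)) - 1) := by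
    simpa [pow_mul] using Nat.sub_dvd_pow_sub_pow (2 ^ m) 1 (n / m)
  set R := 2 ^ (n % m) with hR
  set M := 2 ^ (m * (n / m)) with hM
  have h1R : 1 ≤ R := Nat.one_le_two_pow
  have h1M : 1 ≤ M := Nat.one_le_two_pow
  have hn : 2 ^ n = R * M := by
    rw [hR, hM, ← pow_add]
    congr 1
    exact (Nat.mod_add_div n m).symm
  have hkey : 2 ^ n - 1 = (2 ^ m - 1) * (c * R) + (R - 1) := by
    have : R * M = R * ((2 ^ m - 1) * c) + R := by
      calc R * M = R * ((M - 1) + 1) := by rw [Nat.sub_add_cancel h1M]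
      _ = R * (M - 1) + R := by ring
      _ = R * ((2 ^ m - 1) * c) + R := by rw [hc]
    rw [hn, this]
    have : R * ((2 ^ m - 1) * c) = (2 ^ m - 1) * (c * R) := by ring
    omega
  have hRlt : R - 1 < 2 ^ m - 1 := by
    have : R < 2 ^ m := Nat.pow_lt_pow_right one_lt_two (Nat.mod_lt n hm)
    omega
  rw [hkey, Nat.mul_add_mod, Nat.mod_eq_of_lt hRlt]

lemma gcd_two_pow_sub_one : ∀ m n : ℕ, Nat.gcd (2 ^ m - 1) (2 ^ n - 1) = 2 ^ Nat.gcd m n - 1 := by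
  intro m
  induction m using Nat.strong_induction_on with
  | _ m ih =>
    intro n
    rcases Nat.eq_zero_or_pos m with hm | hm
    · subst hm; simp
    · rw [Nat.gcd_rec (2 ^ m - 1) (2 ^ n - 1), two_pow_sub_one_mod m n hm,
        ih (n % m) (Nat.mod_lt n hm) m, ← Nat.gcd_rec]

lemma card_pow_eq_one_of_dvd {K : Type*} [Field K] [Fintype K] [DecidableEq K]
    {m : ℕ} (hm : 0 < m) (hdvd : m ∣ Fintype.card K - 1) :
    (Finset.univ.filter fun x : K => x ^ m = 1).card = m := by
  obtain ⟨g, hg⟩ := IsCyclic.exists_ofOrder_eq_natCard (α := Kˣ)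
  have hNg : orderOf g = Fintype.card K - 1 := by
    rw [hg, Nat.card_eq_fintype_card, Fintype.card_units]
  set N := Fintype.card K - 1 with hN
  have hN0 : 0 < N := by
    have : 1 < Fintype.card K := Fintype.one_lt_card
    omega
  have horder : orderOf ((↑(g ^ (N / m)) : K)) = m := by
    rw [orderOf_units, orderOf_pow, hNg, Nat.gcd_eq_right (Nat.div_dvd_of_dvd hdvd),
      Nat.div_div_self hdvd hN0.ne']
  have hprim : IsPrimitiveRoot ((↑(g ^ (N / m)) : K)) m := by
    have := IsPrimitiveRoot.orderOf ((↑(g ^ (N / m)) : K))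
    rwa [horder] at this
  have hset : (Finset.univ.filter fun x : K => x ^ m = 1) = Polynomial.nthRootsFinset m (1 : K) := by
    ext x
    simp [Polynomial.mem_nthRootsFinset hm]
  rw [hset, hprim.card_nthRootsFinset]

lemma pow_eq_one_iff_pow_gcd {K : Type*} [Field K] [Fintype K] [DecidableEq K]
    (e : ℕ) (x : K) (hx : x ≠ 0) :
    x ^ e = 1 ↔ x ^ Nat.gcd e (Fintype.card K - 1) = 1 := by
  have hux : ∀ k, x ^ k = 1 ↔ (Units.mk0 x hx) ^ k = 1 := fun k => by
    rw [Units.ext_iff, Units.val_pow_eq_pow_val, Units.val_one, Units.val_mk0]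
  rw [hux, hux, ← Fintype.card_units (α := K)]
  rw [pow_gcd_eq_one, pow_card_eq_one, eq_self_iff_true, and_true]


/-- Second-order zero differential spectrum of `f` at `(a, b)`:
the number of `X` with `f(X+a+b) - f(X+b) - f(X+a) + f(X) = 0`. -/
def sozdSpec {K : Type*} [Field K] [Fintype K] [DecidableEq K] (f : K → K) (a b : K) : ℕ :=
  (Finset.univ.filter fun X : K => f (X + a + b) - f (X + b) - f (X + a) + f X = 0).card

/-- DDT entry of `f` at `(a, b)`: the number of `X` with `f(X+a) - f(X) = b`. -/
def ddtEntry {K : Type*} [Field K] [Fintype K] [DecidableEq K] (f : K → K) (a b : K) : ℕ :=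
  (Finset.univ.filter fun X : K => f (X + a) - f X = b).card

/-- Differential uniformity of `f`: `max {Δ_f(a,b) : a ≠ 0, b}`. -/
def diffUnif {K : Type*} [Field K] [Fintype K] [DecidableEq K] (f : K → K) : ℕ :=
  Finset.sup ((Finset.univ.filter fun a : K => a ≠ 0) ×ˢ Finset.univ)
    fun ab => ddtEntry f ab.1 ab.2

/-- Second-order zero differential uniformity (odd characteristic):
`max {∇_f(a,b) : a ≠ 0, b ≠ 0}`. -/
def sozdUnifOdd {K : Type*} [Field K] [Fintype K] [DecidableEq K] (f : K → K) : ℕ :=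
  Finset.sup ((Finset.univ.filter fun a : K => a ≠ 0) ×ˢ
      (Finset.univ.filter fun b : K => b ≠ 0))
    fun ab => sozdSpec f ab.1 ab.2

/-- For `F(X) = X^{2^n - 2^s}` over `F_{2^n}` with `gcd(n, s+1) = 1`: if `a, b ≠ 0`,
`a ≠ b` and `a·b^{2^s} + a^{2^s}·b = 0`, then `∇_F(a,b) = 2^{gcd(s,n)} - 4`. -/
theorem sozd_inverse_like_degenerate_case
    {n s : ℕ} (hs : 1 ≤ s) (hsn : s < n) (hgcd : Nat.gcd n (s + 1) = 1)
    {K : Type*} [Field K] [Fintype K] [DecidableEq K] [CharP K 2]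
    (hcard : Fintype.card K = 2 ^ n)
    (a b : K) (ha : a ≠ 0) (hb : b ≠ 0) (hab : a ≠ b)
    (hdeg : a * b ^ 2 ^ s + a ^ 2 ^ s * b = 0) :
    sozdSpec (fun X : K => X ^ (2 ^ n - 2 ^ s)) a b = 2 ^ Nat.gcd s n - 4 := by
  classical
  have hFact : Fact (Nat.Prime 2) := ⟨Nat.prime_two⟩
  have h2K : (2 : K) = 0 := CharTwo.two_eq_zero
  have haddeq : ∀ x y : K, x + y = 0 ↔ x = y := fun x y => by
    rw [CharTwo.add_eq_iff_eq_add, zero_add]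
  set q : ℕ := 2 ^ s with hq
  have hqt : q < 2 ^ n := Nat.pow_lt_pow_right one_lt_two hsn
  have hq1 : 1 ≤ q := Nat.one_le_two_pow
  have htq : 2 ^ n - q ≠ 0 := by omega
  have hab0 : a + b ≠ 0 := fun h => hab ((haddeq a b).mp h)
  have hdeg' : a * b ^ q = a ^ q * b := (haddeq _ _).mp hdeg
  have hfrob : ∀ x y : K, (x + y) ^ q = x ^ q + y ^ q := fun x y => add_pow_char_pow x y 2 s
  have hAq : a ^ q ≠ 0 := pow_ne_zero _ ha
  have hBq : b ^ q ≠ 0 := pow_ne_zero _ hb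
  have hABq : a ^ q + b ^ q ≠ 0 := by rw [← hfrob]; exact pow_ne_zero _ hab0
  have hfY : ∀ Y : K, Y ≠ 0 → Y ^ (2 ^ n - q) = Y * (Y ^ q)⁻¹ := by
    intro Y hY
    have hYq : Y ^ q ≠ 0 := pow_ne_zero _ hY
    rw [eq_mul_inv_iff_mul_eq₀ hYq, ← pow_add, Nat.sub_add_cancel hqt.le, ← hcard]
    exact FiniteField.pow_card Y
  -- the degenerate-points sum is nonzero
  have hTkey : ((a + b) * ((a ^ q + b ^ q))⁻¹ + b * (b ^ q)⁻¹ + a * (a ^ q)⁻¹)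
      * (a ^ q * b ^ q * (a ^ q + b ^ q)) = a ^ q * b * (a ^ q + b ^ q) := by
    field_simp
    linear_combination (a * a ^ q * b ^ q + a ^ q * b * b ^ q) * h2K + b ^ q * hdeg'
  have hTsum : (a + b) * ((a ^ q + b ^ q))⁻¹ + b * (b ^ q)⁻¹ + a * (a ^ q)⁻¹ ≠ 0 := by
    intro h
    rw [h, zero_mul] at hTkey
    exact (mul_ne_zero (mul_ne_zero hAq hb) hABq) hTkey.symm
  -- pointwise characterization
  have hpoint : ∀ X : K,
      ((X + a + b) ^ (2 ^ n - q) - (X + b) ^ (2 ^ n - q) - (X + a) ^ (2 ^ n - q)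
          + X ^ (2 ^ n - q) = 0)
        ↔ (X ^ q * a = X * a ^ q ∧ X ≠ 0 ∧ X ≠ a ∧ X ≠ b ∧ X ≠ a + b) := by
    intro X
    rw [CharTwo.sub_eq_add, CharTwo.sub_eq_add]
    by_cases hX0 : X = 0
    · subst hX0
      refine iff_of_false ?_ (by simp)
      simp only [zero_add, zero_pow htq, add_zero]
      rw [hfY _ hab0, hfY _ hb, hfY _ ha, hfrob]
      exact hTsum
    by_cases hXa : X = a
    · rw [hXa]
      refine iff_of_false ?_ (by simp)
      have e1 : a + a + b = b := by linear_combination a * h2K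
      have e2 : a + a = 0 := by linear_combination a * h2K
      rw [e1, e2, zero_pow htq, add_zero, hfY _ hb, hfY _ hab0, hfY _ ha, hfrob]
      intro h
      exact hTsum (by linear_combination h)
    by_cases hXb : X = b
    · rw [hXb]
      refine iff_of_false ?_ (by simp)
      have e1 : b + a + b = a := by linear_combination b * h2K
      have e2 : b + b = 0 := by linear_combination b * h2K
      rw [e1, e2, zero_pow htq, add_zero, hfY _ ha,
        hfY _ (by rw [add_comm]; exact hab0 : b + a ≠ 0), hfY _ hb, hfrob]
      intro h
      exact hTsum (by linear_combination h)
    by_cases hXab : X = a + b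
    · rw [hXab]
      refine iff_of_false ?_ (by simp)
      have e1 : a + b + a + b = 0 := by linear_combination (a + b) * h2K
      have e2 : a + b + b = a := by linear_combination b * h2K
      have e3 : a + b + a = b := by linear_combination a * h2K
      rw [e1, e2, e3, zero_pow htq, zero_add, hfY _ hb, hfY _ ha, hfY _ hab0, hfrob]
      intro h
      exact hTsum (by linear_combination h)
    · -- generic case
      have hx3 : X + a ≠ 0 := fun h => hXa ((haddeq _ _).mp h)
      have hx2 : X + b ≠ 0 := fun h => hXb ((haddeq _ _).mp h)
      have hx1 : X + a + b ≠ 0 := by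
        rw [add_assoc]; exact fun h => hXab ((haddeq _ _).mp h)
      have hYq : X ^ q ≠ 0 := pow_ne_zero _ hX0
      have hYA : X ^ q + a ^ q ≠ 0 := by rw [← hfrob]; exact pow_ne_zero _ hx3
      have hYB : X ^ q + b ^ q ≠ 0 := by rw [← hfrob]; exact pow_ne_zero _ hx2
      have hYAB : X ^ q + a ^ q + b ^ q ≠ 0 := by
        rw [← hfrob, ← hfrob]; exact pow_ne_zero _ hx1
      have hD : X ^ q * (X ^ q + a ^ q) * (X ^ q + b ^ q) * (X ^ q + a ^ q + b ^ q) ≠ 0 :=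
        mul_ne_zero (mul_ne_zero (mul_ne_zero hYq hYA) hYB) hYAB
      have keymul :
          ((X + a + b) * ((X ^ q + a ^ q + b ^ q))⁻¹ + (X + b) * ((X ^ q + b ^ q))⁻¹
              + (X + a) * ((X ^ q + a ^ q))⁻¹ + X * (X ^ q)⁻¹)
            * (X ^ q * (X ^ q + a ^ q) * (X ^ q + b ^ q) * (X ^ q + a ^ q + b ^ q))
          = (X * a ^ q + a * X ^ q) * (b ^ q * (a ^ q + b ^ q)) := by
        have cancel : ∀ u v w : K, v ≠ 0 → u * v⁻¹ * (w * v) = u * w := by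
          intro u v w hv
          calc u * v⁻¹ * (w * v) = u * w * (v⁻¹ * v) := by ring
          _ = u * w := by rw [inv_mul_cancel₀ hv, mul_one]
        have h1 : (X + a + b) * (X ^ q + a ^ q + b ^ q)⁻¹
            * (X ^ q * (X ^ q + a ^ q) * (X ^ q + b ^ q) * (X ^ q + a ^ q + b ^ q))
            = (X + a + b) * (X ^ q * (X ^ q + a ^ q) * (X ^ q + b ^ q)) := by
          rw [show X ^ q * (X ^ q + a ^ q) * (X ^ q + b ^ q) * (X ^ q + a ^ q + b ^ q)
            = (X ^ q * (X ^ q + a ^ q) * (X ^ q + b ^ q)) * (X ^ q + a ^ q + b ^ q) from by ring]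
          exact cancel _ _ _ hYAB
        have h2 : (X + b) * (X ^ q + b ^ q)⁻¹
            * (X ^ q * (X ^ q + a ^ q) * (X ^ q + b ^ q) * (X ^ q + a ^ q + b ^ q))
            = (X + b) * (X ^ q * (X ^ q + a ^ q) * (X ^ q + a ^ q + b ^ q)) := by
          rw [show X ^ q * (X ^ q + a ^ q) * (X ^ q + b ^ q) * (X ^ q + a ^ q + b ^ q)
            = (X ^ q * (X ^ q + a ^ q) * (X ^ q + a ^ q + b ^ q)) * (X ^ q + b ^ q) from by ring]
          exact cancel _ _ _ hYB
        have h3 : (X + a) * (X ^ q + a ^ q)⁻¹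
            * (X ^ q * (X ^ q + a ^ q) * (X ^ q + b ^ q) * (X ^ q + a ^ q + b ^ q))
            = (X + a) * (X ^ q * (X ^ q + b ^ q) * (X ^ q + a ^ q + b ^ q)) := by
          rw [show X ^ q * (X ^ q + a ^ q) * (X ^ q + b ^ q) * (X ^ q + a ^ q + b ^ q)
            = (X ^ q * (X ^ q + b ^ q) * (X ^ q + a ^ q + b ^ q)) * (X ^ q + a ^ q) from by ring]
          exact cancel _ _ _ hYA
        have h4 : X * (X ^ q)⁻¹
            * (X ^ q * (X ^ q + a ^ q) * (X ^ q + b ^ q) * (X ^ q + a ^ q + b ^ q))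
            = X * ((X ^ q + a ^ q) * (X ^ q + b ^ q) * (X ^ q + a ^ q + b ^ q)) := by
          rw [show X ^ q * (X ^ q + a ^ q) * (X ^ q + b ^ q) * (X ^ q + a ^ q + b ^ q)
            = ((X ^ q + a ^ q) * (X ^ q + b ^ q) * (X ^ q + a ^ q + b ^ q)) * X ^ q from by ring]
          exact cancel _ _ _ hYq
        rw [add_mul, add_mul, add_mul, h1, h2, h3, h4]
        linear_combination
          ((X * a ^ q + a * X ^ q) * ((X ^ q) ^ 2 + X ^ q * a ^ q + X ^ q * b ^ q)
            + X * X ^ q * (X ^ q + b ^ q) * (X ^ q + a ^ q + b ^ q)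
            + X ^ q * (X ^ q + a ^ q) * (X * X ^ q + X * b ^ q + b * X ^ q + b * b ^ q)
            + X ^ q * (X ^ q + a ^ q) * a ^ q * b) * h2K
          + (X ^ q * (X ^ q + a ^ q)) * hdeg'
      -- now derive the iff
      rw [hfY _ hx1, hfY _ hx2, hfY _ hx3, hfY _ hX0]
      simp only [hfrob]
      have hiff1 : (X + a + b) * (X ^ q + a ^ q + b ^ q)⁻¹ + (X + b) * (X ^ q + b ^ q)⁻¹
          + (X + a) * (X ^ q + a ^ q)⁻¹ + X * (X ^ q)⁻¹ = 0
          ↔ X * a ^ q + a * X ^ q = 0 := by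
        constructor
        · intro h
          rw [h, zero_mul] at keymul
          rcases mul_eq_zero.mp keymul.symm with h' | h'
          · exact h'
          · exact absurd h' (mul_ne_zero hBq hABq)
        · intro h
          have := keymul
          rw [h, zero_mul] at this
          rcases mul_eq_zero.mp this with h' | h'
          · exact h'
          · exact absurd h' hD
      rw [hiff1]
      simp only [hX0, hXa, hXb, hXab, ne_eq, not_false_iff, and_true]
      constructor
      · intro h
        linear_combination (haddeq _ _).mp h + (X ^ q * a - X * a ^ q) * h2K
      · intro h
        rw [haddeq]
        linear_combination h + (X * a ^ q - a * X ^ q) * h2K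
  -- counting
  have hq2 : 2 ≤ q := by
    have : 2 ^ 1 ≤ 2 ^ s := Nat.pow_le_pow_right (by norm_num) hs
    simpa using this
  have h0a : (0:K) ≠ a := Ne.symm ha
  have h0b : (0:K) ≠ b := Ne.symm hb
  have h0ab : (0:K) ≠ a + b := Ne.symm hab0
  have haab : a ≠ a + b := fun h => hb (by linear_combination -h)
  have hbab : b ≠ a + b := fun h => ha (by linear_combination -h)
  have hsub : ({0, a, b, a + b} : Finset K) ⊆
      univ.filter (fun X : K => X ^ q * a = X * a ^ q) := by
    intro x hx
    simp only [mem_insert, mem_singleton] at hx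
    simp only [mem_filter, mem_univ, true_and]
    rcases hx with rfl | rfl | rfl | rfl
    · simp [zero_pow (by omega : q ≠ 0)]
    · ring
    · linear_combination hdeg'
    · rw [hfrob]; linear_combination hdeg'
  have hP4card : ({0, a, b, a + b} : Finset K).card = 4 := by
    rw [card_insert_of_notMem (by simp [h0a, h0b, h0ab]),
      card_insert_of_notMem (by simp [hab, haab]),
      card_insert_of_notMem (by simp [hbab]), card_singleton]
  have hset : (univ.filter fun X : K =>
        (X + a + b) ^ (2 ^ n - q) - (X + b) ^ (2 ^ n - q) - (X + a) ^ (2 ^ n - q)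
          + X ^ (2 ^ n - q) = 0)
      = (univ.filter fun X : K => X ^ q * a = X * a ^ q) \ {0, a, b, a + b} := by
    ext X
    simp only [mem_filter, mem_univ, true_and, mem_sdiff, mem_insert, mem_singleton]
    rw [hpoint X]
    simp only [not_or, ne_eq]
  have hbij : (univ.filter fun X : K => X ^ q * a = X * a ^ q).card
      = (univ.filter fun x : K => x ^ q = x).card := by
    apply Finset.card_nbij' (i := fun X => a⁻¹ * X) (j := fun x => a * x)
    · intro X hX
      simp only [mem_coe, mem_filter, mem_univ, true_and] at hX ⊢
      rw [mul_pow, inv_pow]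
      rw [inv_mul_eq_iff_eq_mul₀ hAq]
      field_simp
      linear_combination hX
    · intro x hx
      simp only [mem_coe, mem_filter, mem_univ, true_and] at hx ⊢
      rw [mul_pow]
      linear_combination (a ^ q * a) * hx
    · intro X _
      field_simp
    · intro x _
      field_simp
  have hTeq : (univ.filter fun x : K => x ^ q = x)
      = insert (0:K) (univ.filter fun x : K => x ^ (q - 1) = 1) := by
    ext x
    simp only [mem_insert, mem_filter, mem_univ, true_and]
    constructor
    · intro h
      by_cases hx : x = 0
      · exact Or.inl hx
      · right
        have h1 : x ^ (q - 1) * x = 1 * x := by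
          rw [← pow_succ, Nat.sub_add_cancel hq1, one_mul]; exact h
        exact mul_right_cancel₀ hx h1
    · rintro (rfl | h)
      · exact zero_pow (by omega)
      · rw [← Nat.sub_add_cancel hq1, pow_succ, h, one_mul]
  have h0T' : (0:K) ∉ univ.filter (fun x : K => x ^ (q - 1) = 1) := by
    simp [zero_pow (by omega : q - 1 ≠ 0)]
  have hgcdpos : 0 < Nat.gcd (q - 1) (2 ^ n - 1) := by
    apply Nat.gcd_pos_of_pos_left
    omega
  have hT'eq : (univ.filter fun x : K => x ^ (q - 1) = 1)
      = (univ.filter fun x : K => x ^ (Nat.gcd (q - 1) (2 ^ n - 1)) = 1) := by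
    ext x
    simp only [mem_filter, mem_univ, true_and]
    by_cases hx : x = 0
    · subst hx
      rw [zero_pow (by omega : q - 1 ≠ 0), zero_pow (by omega : Nat.gcd (q - 1) (2 ^ n - 1) ≠ 0)]
    · rw [pow_eq_one_iff_pow_gcd (q - 1) x hx, hcard]
  have hdvd : Nat.gcd (q - 1) (2 ^ n - 1) ∣ Fintype.card K - 1 := by
    rw [hcard]; exact Nat.gcd_dvd_right _ _
  have hT'card : (univ.filter fun x : K => x ^ (q - 1) = 1).card
      = 2 ^ Nat.gcd s n - 1 := by
    rw [hT'eq, card_pow_eq_one_of_dvd hgcdpos hdvd]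
    rw [hq]
    exact gcd_two_pow_sub_one s n
  have hd1 : 1 ≤ 2 ^ Nat.gcd s n := Nat.one_le_two_pow
  have hScard : (univ.filter fun X : K => X ^ q * a = X * a ^ q).card
      = 2 ^ Nat.gcd s n := by
    rw [hbij, hTeq, card_insert_of_notMem h0T', hT'card]
    omega
  have final : (univ.filter fun X : K =>
        (X + a + b) ^ (2 ^ n - q) - (X + b) ^ (2 ^ n - q) - (X + a) ^ (2 ^ n - q)
          + X ^ (2 ^ n - q) = 0).card = 2 ^ Nat.gcd s n - 4 := by
    rw [hset, card_sdiff_of_subset hsub, hP4card, hScard]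
  have goal : sozdSpec (fun X : K => X ^ (2 ^ n - q)) a b = 2 ^ Nat.gcd s n - 4 := final
  exact goal
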